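/- Let γ > 0, r ∈ ℕ₀, and t ∈ ℝ. Denote by g_t(s) the function s ↦ e^{−2γ^{−2}(t−s)²} and by d^r/dt^r its r-th derivative in t. Then ∫_ℝ |(d^r/dt^r) e^{−2γ^{−2}(t−s)²}|² ds ≤ √π · 2^{2r − 1/2} · r! · γ^{1 − 2r}. -/

import Mathlib

open Polynomial MeasureTheory Real Filter

lemma gdlb_integrable_pow {b : ℝ} (hb : 0 < b) (n : ℕ) :
    Integrable fun x : ℝ => x ^ n * Real.exp (-b * x ^ 2) := by
  have h := integrable_rpow_mul_exp_neg_mul_sq hb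
    (s := (n : ℝ)) (lt_of_lt_of_le neg_one_lt_zero (Nat.cast_nonneg n))
  simpa [Real.rpow_natCast] using h

lemma gdlb_integrable_poly (P : ℤ[X]) {b : ℝ} (hb : 0 < b) :
    Integrable fun x : ℝ => aeval x P * Real.exp (-b * x ^ 2) := by
  have h : (fun x : ℝ => aeval x P * Real.exp (-b * x ^ 2)) =
      fun x : ℝ => ∑ i ∈ Finset.range (P.natDegree + 1),
        (P.coeff i : ℝ) * (x ^ i * Real.exp (-b * x ^ 2)) := by
    funext x
    rw [Polynomial.aeval_eq_sum_range, Finset.sum_mul]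
    congr 1; funext i
    simp [zsmul_eq_mul]; ring
  rw [h]
  exact integrable_finset_sum _ fun i _ => (gdlb_integrable_pow hb i).const_mul _

lemma gdlb_integrable_half (P : ℤ[X]) :
    Integrable fun x : ℝ => aeval x P * Real.exp (-(x ^ 2 / 2)) := by
  have h := gdlb_integrable_poly P (b := 1/2) (by norm_num)
  have e : ∀ x : ℝ, -(1/2 : ℝ) * x ^ 2 = -(x ^ 2 / 2) := fun x => by ring
  simp_rw [e] at h
  exact h

lemma gdlb_ibp (P Q : ℤ[X]) :
    ∫ x : ℝ, aeval x P * (aeval x (X * Q - derivative Q) * Real.exp (-(x ^ 2 / 2)))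
      = ∫ x : ℝ, aeval x (derivative P) * (aeval x Q * Real.exp (-(x ^ 2 / 2))) := by
  set u : ℝ → ℝ := fun y => aeval y P with hu_def
  set u' : ℝ → ℝ := fun y => aeval y (derivative P) with hu'_def
  set v : ℝ → ℝ := fun y => aeval y Q * Real.exp (-(y ^ 2 / 2)) with hv_def
  set v' : ℝ → ℝ := fun y => -(aeval y (X * Q - derivative Q) * Real.exp (-(y ^ 2 / 2)))
    with hv'_def
  have hu : ∀ x : ℝ, HasDerivAt u (u' x) x := fun x => P.hasDerivAt_aeval x
  have hv : ∀ x : ℝ, HasDerivAt v (v' x) x := by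
    intro x
    have h1 : HasDerivAt (fun y : ℝ => -(y ^ 2 / 2)) (-x) x := by
      have := ((hasDerivAt_pow 2 x).div_const 2).neg
      refine this.congr_deriv ?_
      simp
    have h2 := h1.exp
    have h3 := (Q.hasDerivAt_aeval x).mul h2
    refine h3.congr_deriv ?_
    simp only [hv'_def, map_sub, map_mul, aeval_X]
    ring
  have huv' : Integrable (u * v') := by
    have h := (gdlb_integrable_half (P * (X * Q - derivative Q))).neg
    apply h.congr
    filter_upwards with x
    simp only [hu_def, hv'_def, Pi.mul_apply, Pi.neg_apply, map_mul]
    ring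
  have hu'v : Integrable (u' * v) := by
    have h := gdlb_integrable_half (derivative P * Q)
    apply h.congr
    filter_upwards with x
    simp only [hu'_def, hv_def, Pi.mul_apply, map_mul]
    ring
  have huv : Integrable (u * v) := by
    have h := gdlb_integrable_half (P * Q)
    apply h.congr
    filter_upwards with x
    simp only [hu_def, hv_def, Pi.mul_apply, map_mul]
    ring
  have key := integral_mul_deriv_eq_deriv_mul_of_integrable (fun x _ => hu x) (fun x _ => hv x) huv' hu'v huv
  simp only [hv'_def, mul_neg] at key
  rw [integral_neg] at key
  have key2 := neg_injective key
  simpa [hu_def, hu'_def, hv_def] using key2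

lemma gdlb_main (n : ℕ) : ∀ P : ℤ[X],
    ∫ x : ℝ, aeval x P * (aeval x (hermite n) * Real.exp (-(x ^ 2 / 2)))
      = ∫ x : ℝ, aeval x (derivative^[n] P) * Real.exp (-(x ^ 2 / 2)) := by
  induction n with
  | zero => intro P; simp [hermite_zero]
  | succ n ih =>
      intro P
      rw [hermite_succ, gdlb_ibp P (hermite n), ih (derivative P),
        ← Function.iterate_succ_apply]

lemma gdlb_iter_deriv_hermite (r : ℕ) :
    derivative^[r] (hermite r) = C ((r.factorial : ℤ)) := by
  have hdeg : (derivative^[r] (hermite r)).natDegree = 0 :=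
    Nat.le_zero.mp ((natDegree_iterate_derivative _ r).trans_eq (by simp [natDegree_hermite]))
  rw [eq_C_of_natDegree_eq_zero hdeg, coeff_iterate_derivative]
  simp [coeff_hermite_self, Nat.descFactorial_self]

lemma gdlb_gauss_int : ∫ x : ℝ, Real.exp (-(x ^ 2 / 2)) = Real.sqrt (2 * π) := by
  have h := integral_gaussian (1/2)
  have e : ∀ x : ℝ, -(1/2 : ℝ) * x ^ 2 = -(x ^ 2 / 2) := fun x => by ring
  simp_rw [e] at h
  rw [h]
  norm_num [mul_comm]

lemma gdlb_orth (r : ℕ) :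
    ∫ x : ℝ, aeval x (hermite r) ^ 2 * Real.exp (-(x ^ 2 / 2))
      = (r.factorial : ℝ) * Real.sqrt (2 * π) := by
  have h0 := gdlb_main r (hermite r)
  rw [gdlb_iter_deriv_hermite r] at h0
  have e1 : ∀ x : ℝ, aeval x (hermite r) ^ 2 * Real.exp (-(x ^ 2 / 2))
      = aeval x (hermite r) * (aeval x (hermite r) * Real.exp (-(x ^ 2 / 2))) := by
    intro x; ring
  simp_rw [e1]
  rw [h0]
  have e2 : ∀ x : ℝ, aeval x (C ((r.factorial : ℤ))) = (r.factorial : ℝ) := fun x => by simp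
  simp_rw [e2]
  rw [integral_const_mul, gdlb_gauss_int]

theorem gaussian_derivative_L2_bound (γ : ℝ) (hγ : 0 < γ) (r : ℕ) (t : ℝ) :
    (∫ s : ℝ, |iteratedDeriv r (fun t' => Real.exp (-2 / γ ^ 2 * (t' - s) ^ 2)) t| ^ 2) ≤
      Real.sqrt Real.pi * (2 : ℝ) ^ (2 * (r : ℝ) - 1 / 2) * (Nat.factorial r : ℝ) *
        γ ^ (1 - 2 * (r : ℝ)) := by
  have hγ0 : γ ≠ 0 := ne_of_gt hγ
  set b : ℝ := 2 / γ with hbdef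
  have hbpos : 0 < b := by positivity
  have hψ : ContDiff ℝ (r : ℕ∞) (fun y : ℝ => Real.exp (-(y ^ 2 / 2))) := by
    apply ContDiff.exp
    exact ((contDiff_id.pow 2).div_const 2).neg
  have key : ∀ s : ℝ, iteratedDeriv r (fun t' => Real.exp (-2 / γ ^ 2 * (t' - s) ^ 2)) t
      = b ^ r * ((-1 : ℝ) ^ r * aeval (b * (t - s)) (hermite r)
          * Real.exp (-((b * (t - s)) ^ 2 / 2))) := by
    intro s
    have hfun : (fun t' : ℝ => Real.exp (-2 / γ ^ 2 * (t' - s) ^ 2))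
        = fun t' : ℝ => (fun z : ℝ => Real.exp (-((b * z) ^ 2 / 2))) (t' + (-s)) := by
      funext t'
      simp only
      congr 1
      rw [hbdef]
      field_simp
      ring
    rw [hfun, iteratedDeriv_comp_add_const r (fun z : ℝ => Real.exp (-((b * z) ^ 2 / 2))) (-s)]
    have h2 : iteratedDeriv r (fun z : ℝ => Real.exp (-((b * z) ^ 2 / 2))) (t + -s)
        = b ^ r * iteratedDeriv r (fun y : ℝ => Real.exp (-(y ^ 2 / 2))) (b * (t + -s)) :=
      congrFun (iteratedDeriv_comp_const_mul hψ b) (t + -s)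
    beta_reduce
    rw [h2, iteratedDeriv_eq_iterate, show b * (t + -s) = b * (t - s) by ring,
      Polynomial.deriv_gaussian_eq_hermite_mul_gaussian]
  have habs : ∀ s : ℝ,
      |iteratedDeriv r (fun t' => Real.exp (-2 / γ ^ 2 * (t' - s) ^ 2)) t| ^ 2
        = b ^ (2 * r) * (aeval (b * (t - s)) (hermite r) ^ 2
            * Real.exp (-(b * (t - s)) ^ 2)) := by
    intro s
    rw [sq_abs, key s]
    have h1 : ((-1 : ℝ) ^ r) ^ 2 = 1 := by
      rw [← pow_mul, mul_comm, pow_mul]; norm_num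
    have h2 : (Real.exp (-((b * (t - s)) ^ 2 / 2))) ^ 2
        = Real.exp (-(b * (t - s)) ^ 2) := by
      rw [sq, ← Real.exp_add]; congr 1; ring
    calc (b ^ r * ((-1 : ℝ) ^ r * aeval (b * (t - s)) (hermite r)
            * Real.exp (-((b * (t - s)) ^ 2 / 2)))) ^ 2
        = (b ^ r) ^ 2 * (((-1 : ℝ) ^ r) ^ 2 * (aeval (b * (t - s)) (hermite r) ^ 2
            * (Real.exp (-((b * (t - s)) ^ 2 / 2))) ^ 2)) := by ring
      _ = b ^ (2 * r) * (aeval (b * (t - s)) (hermite r) ^ 2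
            * Real.exp (-(b * (t - s)) ^ 2)) := by
          rw [h1, h2, one_mul, ← pow_mul, mul_comm r 2]
  simp_rw [habs]
  rw [integral_const_mul]
  set G : ℝ → ℝ := fun x => aeval x (hermite r) ^ 2 * Real.exp (-x ^ 2) with hG_def
  have hchg : (∫ s : ℝ, G (b * (t - s))) = |b⁻¹| * ∫ x, G x := by
    rw [show (fun s : ℝ => G (b * (t - s))) = fun s : ℝ => (fun u : ℝ => G (b * u)) (t - s)
      from rfl]
    rw [integral_sub_left_eq_self (fun u : ℝ => G (b * u)) volume t]
    rw [MeasureTheory.Measure.integral_comp_mul_left (fun u : ℝ => G u) b]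
    simp [smul_eq_mul]
  have hGint : Integrable G := by
    have h := gdlb_integrable_poly ((hermite r) ^ 2) (b := 1) one_pos
    simp only [map_pow, neg_mul, one_mul] at h
    exact h
  have hHint : Integrable fun x : ℝ => aeval x (hermite r) ^ 2 * Real.exp (-(x ^ 2 / 2)) := by
    apply (gdlb_integrable_half ((hermite r) ^ 2)).congr
    filter_upwards with x
    rw [map_pow]
  have hmono : (∫ x, G x) ≤ (r.factorial : ℝ) * Real.sqrt (2 * π) := by
    rw [← gdlb_orth r]
    apply integral_mono hGint hHint
    intro x
    simp only [hG_def]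
    apply mul_le_mul_of_nonneg_left _ (sq_nonneg _)
    apply Real.exp_le_exp.mpr
    nlinarith [sq_nonneg x]
  have hstep : b ^ (2 * r) * ∫ s : ℝ, G (b * (t - s))
      ≤ b ^ (2 * r) * (|b⁻¹| * ((r.factorial : ℝ) * Real.sqrt (2 * π))) := by
    rw [hchg]
    apply mul_le_mul_of_nonneg_left _ (pow_nonneg hbpos.le _)
    exact mul_le_mul_of_nonneg_left hmono (abs_nonneg _)
  refine hstep.trans_eq ?_
  -- arithmetic
  have hb_inv : |b⁻¹| = γ / 2 := by
    rw [abs_of_nonneg (inv_nonneg.mpr hbpos.le), hbdef]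
    field_simp
  have e2 : (2 : ℝ) ^ (2 * (r : ℝ) - 1 / 2) = 2 ^ (2 * r) / Real.sqrt 2 := by
    rw [Real.rpow_sub two_pos]
    congr 1
    · rw [show (2 * (r : ℝ)) = ((2 * r : ℕ) : ℝ) by push_cast; ring, Real.rpow_natCast]
    · exact (Real.sqrt_eq_rpow 2).symm
  have e3 : γ ^ (1 - 2 * (r : ℝ)) = γ / γ ^ (2 * r) := by
    rw [Real.rpow_sub hγ, Real.rpow_one,
      show (2 * (r : ℝ)) = ((2 * r : ℕ) : ℝ) by push_cast; ring, Real.rpow_natCast]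
  have hsqrt2 : Real.sqrt 2 * Real.sqrt 2 = 2 := Real.mul_self_sqrt (by norm_num)
  have hsqrt2pi : Real.sqrt (2 * π) = Real.sqrt 2 * Real.sqrt π :=
    Real.sqrt_mul (by norm_num) π
  rw [hb_inv, e2, e3, hsqrt2pi, hbdef, div_pow]
  have hγpow : (γ : ℝ) ^ (2 * r) ≠ 0 := pow_ne_zero _ hγ0
  have hs2 : Real.sqrt 2 ≠ 0 := by positivity
  field_simp
  ring_nf
  rw [Real.sq_sqrt (by norm_num : (0:ℝ) ≤ 2)]
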